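/- (Proposition 1, minimizer equivalence.) Under the hypotheses of the completion-of-squares identity — continuous A : [t0,t1] → ℝ^{n×n}, B̂ : [t0,t1] → ℝ^{n×m}, symmetric continuous Q : [t0,t1] → ℝ^{n×n}, and a differentiable symmetric K : [t0,t1] → ℝ^{n×n} solving K' = −AᵀK − KA + KB̂B̂ᵀK − Q with K(t1) = K1 — let (z1,u1) and (z2,u2) be two admissible pairs for the dynamics z' = Az + B̂u with the same endpoints z(t0) = x, z(t1) = y, and set vᵢ(τ) := uᵢ(τ) + B̂(τ)ᵀK(τ)zᵢ(τ) for i = 1,2. Then ∫_{t0}^{t1}((1/2)|u1|² + (1/2)z1ᵀQz1)dτ ≤ ∫_{t0}^{t1}((1/2)|u2|² + (1/2)z2ᵀQz2)dτ if and only if ∫_{t0}^{t1}(1/2)|v1|²dτ ≤ ∫_{t0}^{t1}(1/2)|v2|²dτ. In particular, an admissible trajectory minimizes the cost ∫((1/2)|u|² + (1/2)zᵀQz)dτ if and only if it minimizes the transformed cost ∫(1/2)|v|²dτ. -/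

import Mathlib

open MeasureTheory Matrix

attribute [local instance] Matrix.normedAddCommGroup Matrix.normedSpace

/-- An admissible pair for the linear time-varying dynamics `(A, B̂)` with endpoints
`x, y` on `[t0, t1]`: a continuously differentiable trajectory `z` and continuous
control `u` with `z' = A z + B̂ u`, `z(t0) = x`, `z(t1) = y`. -/
def Admissible (n m : ℕ) (t0 t1 : ℝ)
    (A : ℝ → Matrix (Fin n) (Fin n) ℝ) (B : ℝ → Matrix (Fin n) (Fin m) ℝ)
    (x y : Fin n → ℝ) (z : ℝ → Fin n → ℝ) (u : ℝ → Fin m → ℝ) : Prop :=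
  ContinuousOn u (Set.Icc t0 t1) ∧
  (∀ τ ∈ Set.Icc t0 t1,
    HasDerivWithinAt z (A τ *ᵥ z τ + B τ *ᵥ u τ) (Set.Icc t0 t1) τ) ∧
  z t0 = x ∧ z t1 = y

lemma dotT {n m : ℕ} (M : Matrix (Fin n) (Fin m) ℝ) (a : Fin n → ℝ) (b : Fin m → ℝ) :
    a ⬝ᵥ M *ᵥ b = Mᵀ *ᵥ a ⬝ᵥ b := by
  rw [Matrix.dotProduct_mulVec, Matrix.mulVec_transpose]

lemma dotT' {n m : ℕ} (M : Matrix (Fin n) (Fin m) ℝ) (a : Fin m → ℝ) (b : Fin n → ℝ) :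
    M *ᵥ a ⬝ᵥ b = a ⬝ᵥ Mᵀ *ᵥ b := by
  rw [dotT, transpose_transpose]

lemma symm_dot {n : ℕ} (K : Matrix (Fin n) (Fin n) ℝ) (hK : Kᵀ = K) (a b : Fin n → ℝ) :
    a ⬝ᵥ K *ᵥ b = b ⬝ᵥ K *ᵥ a := by
  rw [dotT, hK, dotProduct_comm]

lemma sq_id {n m : ℕ} (A Q K K' : Matrix (Fin n) (Fin n) ℝ) (B : Matrix (Fin n) (Fin m) ℝ)
    (hKs : Kᵀ = K) (hK' : K' = -Aᵀ * K - K * A + K * B * Bᵀ * K - Q)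
    (z : Fin n → ℝ) (u : Fin m → ℝ) :
    (1/2 : ℝ) * ((u + Bᵀ *ᵥ (K *ᵥ z)) ⬝ᵥ (u + Bᵀ *ᵥ (K *ᵥ z)))
      = ((1/2) * (u ⬝ᵥ u) + (1/2) * (z ⬝ᵥ Q *ᵥ z))
        + ((1/2) * ((A *ᵥ z + B *ᵥ u) ⬝ᵥ K *ᵥ z)
          + ((1/2) * (z ⬝ᵥ K' *ᵥ z) + (1/2) * (z ⬝ᵥ K *ᵥ (A *ᵥ z + B *ᵥ u)))) := by
  subst hK'
  have e1 : u ⬝ᵥ (Bᵀ *ᵥ (K *ᵥ z)) = (B *ᵥ u) ⬝ᵥ (K *ᵥ z) := by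
    rw [dotT, transpose_transpose]
  have e2 : (Bᵀ *ᵥ (K *ᵥ z)) ⬝ᵥ (Bᵀ *ᵥ (K *ᵥ z)) = z ⬝ᵥ (K * B * Bᵀ * K) *ᵥ z := by
    rw [← dotT B (K *ᵥ z) (Bᵀ *ᵥ (K *ᵥ z)), dotT' K z, hKs]
    simp [Matrix.mulVec_mulVec, Matrix.mul_assoc]
  have e3 : (A *ᵥ z) ⬝ᵥ (K *ᵥ z) = z ⬝ᵥ (Aᵀ * K) *ᵥ z := by
    rw [dotT' A z (K *ᵥ z), Matrix.mulVec_mulVec]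
  have e4 : z ⬝ᵥ (K *ᵥ (A *ᵥ z)) = z ⬝ᵥ (K * A) *ᵥ z := by rw [Matrix.mulVec_mulVec]
  have e5 : z ⬝ᵥ (K *ᵥ (B *ᵥ u)) = (B *ᵥ u) ⬝ᵥ (K *ᵥ z) := symm_dot K hKs z (B *ᵥ u)
  have e0 : z ⬝ᵥ (-Aᵀ * K) *ᵥ z = -(z ⬝ᵥ (Aᵀ * K) *ᵥ z) := by
    rw [neg_mul, Matrix.neg_mulVec, dotProduct_neg]
  simp only [dotProduct_add, add_dotProduct, Matrix.mulVec_add,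
    Matrix.sub_mulVec, Matrix.add_mulVec, dotProduct_sub]
  rw [dotProduct_comm (Bᵀ *ᵥ (K *ᵥ z)) u]
  rw [e0]
  linarith [e1, e2, e3, e4, e5]

lemma hasDeriv_quad {n : ℕ} (K : ℝ → Matrix (Fin n) (Fin n) ℝ) (K' : Matrix (Fin n) (Fin n) ℝ)
    (z : ℝ → Fin n → ℝ) (w : Fin n → ℝ) (s : Set ℝ) (τ : ℝ)
    (hK : HasDerivWithinAt K K' s τ) (hz : HasDerivWithinAt z w s τ) :
    HasDerivWithinAt (fun t => z t ⬝ᵥ K t *ᵥ z t)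
      (w ⬝ᵥ K τ *ᵥ z τ + (z τ ⬝ᵥ K' *ᵥ z τ + z τ ⬝ᵥ K τ *ᵥ w)) s τ := by
  have hzi : ∀ i, HasDerivWithinAt (fun t => z t i) (w i) s τ := fun i =>
    hasDerivWithinAt_pi.mp hz i
  have hKij : ∀ i j, HasDerivWithinAt (fun t => K t i j) (K' i j) s τ := fun i j =>
    hasDerivWithinAt_pi.mp (hasDerivWithinAt_pi.mp hK i) j
  have H : HasDerivWithinAt (fun t => ∑ i, ∑ j, z t i * (K t i j * z t j))
      (∑ i, ∑ j, (w i * (K τ i j * z τ j) + z τ i * (K' i j * z τ j + K τ i j * w j))) s τ := by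
    apply HasDerivWithinAt.fun_sum; intro i _
    apply HasDerivWithinAt.fun_sum; intro j _
    exact (hzi i).mul ((hKij i j).mul (hzi j))
  convert H using 1
  · funext t
    simp [dotProduct, Matrix.mulVec, Finset.mul_sum]
  · simp [dotProduct, Matrix.mulVec, Finset.mul_sum, Finset.sum_add_distrib]
    rw [← Finset.sum_add_distrib]
    congr 1; funext i; rw [← Finset.sum_add_distrib]; congr 1; funext j; ring

lemma contOn_dot {ι : Type*} [Fintype ι] (f g : ℝ → ι → ℝ) (s : Set ℝ)
    (hf : ContinuousOn f s) (hg : ContinuousOn g s) :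
    ContinuousOn (fun t => f t ⬝ᵥ g t) s := by
  simp only [dotProduct]
  apply continuousOn_finset_sum; intro i _
  exact ((continuous_apply i).comp_continuousOn hf).mul
    ((continuous_apply i).comp_continuousOn hg)

lemma contOn_mul {n m p : ℕ} (M : ℝ → Matrix (Fin n) (Fin m) ℝ)
    (N : ℝ → Matrix (Fin m) (Fin p) ℝ) (s : Set ℝ)
    (hM : ContinuousOn M s) (hN : ContinuousOn N s) :
    ContinuousOn (fun t => M t * N t) s := by
  refine continuousOn_pi.mpr ?_; intro i; rw [continuousOn_pi]; intro j
  simp only [Matrix.mul_apply]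
  apply continuousOn_finset_sum; intro k _
  exact (((continuous_apply k).comp ((continuous_apply i).comp continuous_id)).comp_continuousOn hM).mul
    (((continuous_apply j).comp ((continuous_apply k).comp continuous_id)).comp_continuousOn hN)

lemma contOn_mulVec {n m : ℕ} (M : ℝ → Matrix (Fin n) (Fin m) ℝ) (f : ℝ → Fin m → ℝ)
    (s : Set ℝ) (hM : ContinuousOn M s) (hf : ContinuousOn f s) :
    ContinuousOn (fun t => M t *ᵥ f t) s := by
  rw [continuousOn_pi]; intro i
  simp only [Matrix.mulVec, dotProduct]
  apply continuousOn_finset_sum; intro j _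
  exact ((continuous_apply j).comp ((continuous_apply i).comp continuous_id)).comp_continuousOn hM
    |>.mul ((continuous_apply j).comp_continuousOn hf)

/-- Completion of squares: the transformed cost equals the original cost plus a
constant depending only on the endpoints. -/
lemma cost_id (n m : ℕ) (t0 t1 : ℝ) (h : t0 < t1)
    (A Q : ℝ → Matrix (Fin n) (Fin n) ℝ) (B : ℝ → Matrix (Fin n) (Fin m) ℝ)
    (hA : ContinuousOn A (Set.Icc t0 t1)) (hB : ContinuousOn B (Set.Icc t0 t1))
    (hQ : ContinuousOn Q (Set.Icc t0 t1))
    (K : ℝ → Matrix (Fin n) (Fin n) ℝ)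
    (hKsymm : ∀ τ ∈ Set.Icc t0 t1, (K τ).IsSymm)
    (hK : ∀ τ ∈ Set.Icc t0 t1,
      HasDerivWithinAt K
        (-(A τ)ᵀ * K τ - K τ * A τ + K τ * B τ * (B τ)ᵀ * K τ - Q τ)
        (Set.Icc t0 t1) τ)
    (x y : Fin n → ℝ) (z : ℝ → Fin n → ℝ) (u : ℝ → Fin m → ℝ)
    (hadm : Admissible n m t0 t1 A B x y z u) :
    (∫ τ in t0..t1, (1/2 : ℝ) *
        ((u τ + (B τ)ᵀ *ᵥ (K τ *ᵥ z τ)) ⬝ᵥ (u τ + (B τ)ᵀ *ᵥ (K τ *ᵥ z τ))))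
      = (∫ τ in t0..t1, ((1/2) * (u τ ⬝ᵥ u τ) + (1/2) * (z τ ⬝ᵥ Q τ *ᵥ z τ)))
        + ((1/2) * (y ⬝ᵥ K t1 *ᵥ y) - (1/2) * (x ⬝ᵥ K t0 *ᵥ x)) := by
  obtain ⟨hu, hz, hz0, hz1⟩ := hadm
  set s := Set.Icc t0 t1 with hs
  -- continuity facts
  have hzc : ContinuousOn z s := fun τ hτ => (hz τ hτ).continuousWithinAt
  have hKc : ContinuousOn K s := fun τ hτ => (hK τ hτ).continuousWithinAt
  have hKzc : ContinuousOn (fun t => K t *ᵥ z t) s := contOn_mulVec K z s hKc hzc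
  have hwc : ContinuousOn (fun t => A t *ᵥ z t + B t *ᵥ u t) s :=
    (contOn_mulVec A z s hA hzc).add (contOn_mulVec B u s hB hu)
  have hBt : ContinuousOn (fun t => (B t)ᵀ) s := by
    refine continuousOn_pi.mpr ?_; intro i; rw [continuousOn_pi]; intro j
    simp only [Matrix.transpose_apply]
    exact ((continuous_apply i).comp ((continuous_apply j).comp continuous_id)).comp_continuousOn hB
  have hAt : ContinuousOn (fun t => (A t)ᵀ) s := by
    refine continuousOn_pi.mpr ?_; intro i; rw [continuousOn_pi]; intro j
    simp only [Matrix.transpose_apply]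
    exact ((continuous_apply i).comp ((continuous_apply j).comp continuous_id)).comp_continuousOn hA
  have hK'c : ContinuousOn
      (fun t => -(A t)ᵀ * K t - K t * A t + K t * B t * (B t)ᵀ * K t - Q t) s :=
    ((((contOn_mul _ _ s hAt.neg hKc).sub (contOn_mul _ _ s hKc hA)).add
      (contOn_mul _ _ s (contOn_mul _ _ s (contOn_mul _ _ s hKc hB) hBt) hKc)).sub hQ)
  -- the derivative function
  set D : ℝ → ℝ := fun t => (1/2) * ((A t *ᵥ z t + B t *ᵥ u t) ⬝ᵥ K t *ᵥ z t)
      + ((1/2) * (z t ⬝ᵥ (-(A t)ᵀ * K t - K t * A t + K t * B t * (B t)ᵀ * K t - Q t) *ᵥ z t)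
        + (1/2) * (z t ⬝ᵥ K t *ᵥ (A t *ᵥ z t + B t *ᵥ u t))) with hD
  set g : ℝ → ℝ := fun t => (1/2) * (z t ⬝ᵥ K t *ᵥ z t) with hg
  have hgderiv : ∀ τ ∈ s, HasDerivWithinAt g (D τ) s τ := by
    intro τ hτ
    have := (hasDeriv_quad K _ z _ s τ (hK τ hτ) (hz τ hτ)).const_mul (1/2 : ℝ)
    convert this using 1
    · rfl
    · rfl
    simp only [hD]
    ring
  -- pointwise identity on s
  have hpt : ∀ τ ∈ s, (1/2 : ℝ) *
        ((u τ + (B τ)ᵀ *ᵥ (K τ *ᵥ z τ)) ⬝ᵥ (u τ + (B τ)ᵀ *ᵥ (K τ *ᵥ z τ)))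
      = ((1/2) * (u τ ⬝ᵥ u τ) + (1/2) * (z τ ⬝ᵥ Q τ *ᵥ z τ)) + D τ := by
    intro τ hτ
    have := sq_id (A τ) (Q τ) (K τ) _ (B τ) (hKsymm τ hτ) rfl (z τ) (u τ)
    rw [this]
  -- integrability
  have hDc : ContinuousOn D s := by
    apply ContinuousOn.add
    · exact (continuousOn_const.mul (contOn_dot _ _ s hwc hKzc))
    · apply ContinuousOn.add
      · exact continuousOn_const.mul (contOn_dot _ _ s hzc
          (contOn_mulVec _ z s hK'c hzc))
      · exact continuousOn_const.mul (contOn_dot _ _ s hzc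
          (contOn_mulVec K _ s hKc hwc))
  have hsu : Set.uIcc t0 t1 = s := Set.uIcc_of_le h.le
  have hDint : IntervalIntegrable D volume t0 t1 :=
    (hDc.mono hsu.le).intervalIntegrable
  have hFc : ContinuousOn (fun τ => (1/2 : ℝ) * (u τ ⬝ᵥ u τ) + (1/2) * (z τ ⬝ᵥ Q τ *ᵥ z τ)) s :=
    (continuousOn_const.mul (contOn_dot _ _ s hu hu)).add
      (continuousOn_const.mul (contOn_dot _ _ s hzc (contOn_mulVec Q z s hQ hzc)))
  have hFint : IntervalIntegrable
      (fun τ => (1/2 : ℝ) * (u τ ⬝ᵥ u τ) + (1/2) * (z τ ⬝ᵥ Q τ *ᵥ z τ)) volume t0 t1 :=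
    (hFc.mono hsu.le).intervalIntegrable
  -- FTC for g
  have hftc : ∫ τ in t0..t1, D τ = g t1 - g t0 := by
    apply intervalIntegral.integral_eq_sub_of_hasDeriv_right_of_le h.le
    · exact fun τ hτ => (hgderiv τ hτ).continuousWithinAt
    · intro τ hτ
      exact ((hgderiv τ (Set.mem_Icc_of_Ioo hτ)).hasDerivAt
        (Icc_mem_nhds hτ.1 hτ.2)).hasDerivWithinAt
    · exact hDint
  -- combine
  calc (∫ τ in t0..t1, (1/2 : ℝ) *
        ((u τ + (B τ)ᵀ *ᵥ (K τ *ᵥ z τ)) ⬝ᵥ (u τ + (B τ)ᵀ *ᵥ (K τ *ᵥ z τ))))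
      = ∫ τ in t0..t1, (((1/2 : ℝ) * (u τ ⬝ᵥ u τ) + (1/2) * (z τ ⬝ᵥ Q τ *ᵥ z τ)) + D τ) := by
        apply intervalIntegral.integral_congr
        intro τ hτ
        exact hpt τ (hsu ▸ hτ)
    _ = (∫ τ in t0..t1, ((1/2 : ℝ) * (u τ ⬝ᵥ u τ) + (1/2) * (z τ ⬝ᵥ Q τ *ᵥ z τ)))
        + ∫ τ in t0..t1, D τ := intervalIntegral.integral_add hFint hDint
    _ = _ := by
        rw [hftc]; simp only [hg, hz0, hz1]

/-- Proposition 1 (minimizer equivalence): under the Riccati completion-of-squares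
hypotheses, for two admissible pairs with the same endpoints, the original quadratic
costs compare exactly as the transformed costs `∫ (1/2)|v|²` do; in particular an
admissible pair minimizes the original cost iff it minimizes the transformed cost. -/
theorem stmt_4 (n m : ℕ) (t0 t1 : ℝ) (h : t0 < t1)
    (A Q : ℝ → Matrix (Fin n) (Fin n) ℝ) (B : ℝ → Matrix (Fin n) (Fin m) ℝ)
    (hA : ContinuousOn A (Set.Icc t0 t1)) (hB : ContinuousOn B (Set.Icc t0 t1))
    (hQ : ContinuousOn Q (Set.Icc t0 t1))
    (hQsymm : ∀ τ ∈ Set.Icc t0 t1, (Q τ).IsSymm)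
    (K : ℝ → Matrix (Fin n) (Fin n) ℝ) (K1 : Matrix (Fin n) (Fin n) ℝ)
    (hKsymm : ∀ τ ∈ Set.Icc t0 t1, (K τ).IsSymm)
    (hK : ∀ τ ∈ Set.Icc t0 t1,
      HasDerivWithinAt K
        (-(A τ)ᵀ * K τ - K τ * A τ + K τ * B τ * (B τ)ᵀ * K τ - Q τ)
        (Set.Icc t0 t1) τ)
    (hK1 : K t1 = K1)
    (x y : Fin n → ℝ)
    (z1 z2 : ℝ → Fin n → ℝ) (u1 u2 : ℝ → Fin m → ℝ)
    (h1 : Admissible n m t0 t1 A B x y z1 u1)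
    (h2 : Admissible n m t0 t1 A B x y z2 u2)
    (v1 v2 : ℝ → Fin m → ℝ)
    (hv1 : v1 = fun τ => u1 τ + (B τ)ᵀ *ᵥ (K τ *ᵥ z1 τ))
    (hv2 : v2 = fun τ => u2 τ + (B τ)ᵀ *ᵥ (K τ *ᵥ z2 τ)) :
    ((∫ τ in t0..t1, ((1/2) * (u1 τ ⬝ᵥ u1 τ) + (1/2) * (z1 τ ⬝ᵥ Q τ *ᵥ z1 τ)))
        ≤ (∫ τ in t0..t1, ((1/2) * (u2 τ ⬝ᵥ u2 τ) + (1/2) * (z2 τ ⬝ᵥ Q τ *ᵥ z2 τ)))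
      ↔ (∫ τ in t0..t1, (1/2) * (v1 τ ⬝ᵥ v1 τ))
        ≤ (∫ τ in t0..t1, (1/2) * (v2 τ ⬝ᵥ v2 τ))) ∧
    ((∀ z u, Admissible n m t0 t1 A B x y z u →
        (∫ τ in t0..t1, ((1/2) * (u1 τ ⬝ᵥ u1 τ) + (1/2) * (z1 τ ⬝ᵥ Q τ *ᵥ z1 τ)))
          ≤ (∫ τ in t0..t1, ((1/2) * (u τ ⬝ᵥ u τ) + (1/2) * (z τ ⬝ᵥ Q τ *ᵥ z τ))))
      ↔ (∀ z u, Admissible n m t0 t1 A B x y z u →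
        (∫ τ in t0..t1, (1/2) * (v1 τ ⬝ᵥ v1 τ))
          ≤ (∫ τ in t0..t1, (1/2) *
              ((u τ + (B τ)ᵀ *ᵥ (K τ *ᵥ z τ)) ⬝ᵥ (u τ + (B τ)ᵀ *ᵥ (K τ *ᵥ z τ)))))) := by
  subst hv1 hv2
  set c : ℝ := (1/2) * (y ⬝ᵥ K t1 *ᵥ y) - (1/2) * (x ⬝ᵥ K t0 *ᵥ x) with hc
  have key : ∀ z u, Admissible n m t0 t1 A B x y z u →
      (∫ τ in t0..t1, (1/2 : ℝ) *
          ((u τ + (B τ)ᵀ *ᵥ (K τ *ᵥ z τ)) ⬝ᵥ (u τ + (B τ)ᵀ *ᵥ (K τ *ᵥ z τ))))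
        = (∫ τ in t0..t1, ((1/2) * (u τ ⬝ᵥ u τ) + (1/2) * (z τ ⬝ᵥ Q τ *ᵥ z τ))) + c :=
    fun z u hadm => cost_id n m t0 t1 h A Q B hA hB hQ K hKsymm hK x y z u hadm
  have k1 := key z1 u1 h1
  have k2 := key z2 u2 h2
  constructor
  · rw [k1, k2]
    exact (add_le_add_iff_right c).symm
  · constructor
    · intro H z u hadm
      have := H z u hadm
      have kz := key z u hadm
      rw [k1, kz]
      linarith
    · intro H z u hadm
      have := H z u hadm
      have kz := key z u hadm
      rw [k1, kz] at this
      linarith
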